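/- Let n be prime and k ≥ 1, and let A*_k be the family of all ⌊n/2⌋-element subsets A of {1,...,n} such that Σ_{i∈A} i^d ≡ 0 (mod n) for all 1 ≤ d ≤ k. Then A*_k satisfies |A \ B| > k for all distinct A, B in A*_k. -/

import Mathlib

open Finset

theorem aux_newton_19 {F : Type*} [CommRing F] (S : Finset F) (d : ℕ) :
    (d : F) * S.val.esymm d = (-1) ^ (d + 1) *
      ∑ a ∈ (Finset.HasAntidiagonal.antidiagonal d).filter (fun a => a.1 < d),
        (-1) ^ a.1 * S.val.esymm a.1 * ∑ x ∈ S, x ^ a.2 := by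
  have h := congrArg (MvPolynomial.aeval (fun x : ↥S => (x : F)))
    (MvPolynomial.mul_esymm_eq_sum (↥S) F d)
  have he : ∀ m : ℕ, MvPolynomial.aeval (fun x : ↥S => (x : F))
      (MvPolynomial.esymm (↥S) F m) = S.val.esymm m := by
    intro m
    rw [MvPolynomial.aeval_esymm_eq_multiset_esymm]
    congr 1
    exact Multiset.attach_map_val S.val
  have hp : ∀ m : ℕ, MvPolynomial.aeval (fun x : ↥S => (x : F))
      (MvPolynomial.psum (↥S) F m) = ∑ x ∈ S, x ^ m := by
    intro m
    rw [MvPolynomial.psum]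
    simp [Finset.sum_attach S (fun x => x ^ m)]
  simpa [map_mul, map_sum, map_pow, map_natCast, he, hp] using h

theorem aux_eq_19 {F : Type*} [Field F] (S T : Finset F) (m : ℕ)
    (hS : S.card = m) (hT : T.card = m)
    (hchar : ∀ d : ℕ, 1 ≤ d → d ≤ m → (d : F) ≠ 0)
    (hpow : ∀ d : ℕ, 1 ≤ d → d ≤ m → ∑ x ∈ S, x ^ d = ∑ x ∈ T, x ^ d) :
    S = T := by
  have he : ∀ d : ℕ, d ≤ m → S.val.esymm d = T.val.esymm d := by
    intro d
    induction d using Nat.strong_induction_on with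
    | _ d ih =>
      intro hdm
      rcases Nat.eq_zero_or_pos d with rfl | hd
      · simp [Multiset.esymm]
      · have h1 := aux_newton_19 S d
        have h2 := aux_newton_19 T d
        have hsum : ∑ a ∈ (Finset.HasAntidiagonal.antidiagonal d).filter (fun a => a.1 < d),
              (-1 : F) ^ a.1 * S.val.esymm a.1 * ∑ x ∈ S, x ^ a.2
            = ∑ a ∈ (Finset.HasAntidiagonal.antidiagonal d).filter (fun a => a.1 < d),
              (-1 : F) ^ a.1 * T.val.esymm a.1 * ∑ x ∈ T, x ^ a.2 := by
          apply Finset.sum_congr rfl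
          intro a ha
          simp only [Finset.mem_filter, Finset.HasAntidiagonal.mem_antidiagonal] at ha
          have h2' : 1 ≤ a.2 := by omega
          have h2m : a.2 ≤ m := by omega
          rw [ih a.1 ha.2 (by omega), hpow a.2 h2' h2m]
        have : (d : F) * S.val.esymm d = (d : F) * T.val.esymm d := by
          rw [h1, h2, hsum]
        exact mul_left_cancel₀ (hchar d hd hdm) this
  have hprod : (S.val.map fun t => Polynomial.X - Polynomial.C t).prod
      = (T.val.map fun t => Polynomial.X - Polynomial.C t).prod := by
    rw [Multiset.prod_X_sub_X_eq_sum_esymm, Multiset.prod_X_sub_X_eq_sum_esymm]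
    have hcS : Multiset.card S.val = m := hS
    have hcT : Multiset.card T.val = m := hT
    rw [hcS, hcT]
    apply Finset.sum_congr rfl
    intro j hj
    rw [Finset.mem_range] at hj
    rw [he j (by omega)]
  have hsub : S ⊆ T := by
    intro x hx
    have h0 : Polynomial.eval x ((S.val.map fun t => Polynomial.X - Polynomial.C t).prod) = 0 := by
      rw [Polynomial.eval_multiset_prod]
      apply Multiset.prod_eq_zero
      simp only [Multiset.mem_map]
      exact ⟨Polynomial.X - Polynomial.C x, ⟨x, hx, rfl⟩, by simp⟩
    rw [hprod, Polynomial.eval_multiset_prod] at h0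
    rw [Multiset.prod_eq_zero_iff] at h0
    simp only [Multiset.mem_map] at h0
    obtain ⟨p, ⟨t, ht, rfl⟩, hp⟩ := h0
    simp only [Polynomial.eval_sub, Polynomial.eval_X, Polynomial.eval_C, sub_eq_zero] at hp
    rwa [hp]
  exact Finset.eq_of_subset_of_card_le hsub (by omega)

theorem stmt_19 (n k : ℕ) (hn : n.Prime) (hk : 1 ≤ k)
    (A B : Finset (Fin n))
    (hAcard : A.card = n / 2) (hBcard : B.card = n / 2)
    (hAsum : ∀ d, 1 ≤ d → d ≤ k → (∑ i ∈ A, ((i : ℕ) + 1) ^ d) % n = 0)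
    (hBsum : ∀ d, 1 ≤ d → d ≤ k → (∑ i ∈ B, ((i : ℕ) + 1) ^ d) % n = 0)
    (hAB : A ≠ B) :
    k < (A \ B).card := by
  haveI : Fact n.Prime := ⟨hn⟩
  by_contra hcon
  push_neg at hcon
  set m := (A \ B).card with hm
  have hBA : (B \ A).card = m := Finset.card_sdiff_comm (hBcard.trans hAcard.symm)
  have hmpos : 1 ≤ m := by
    rcases Nat.eq_zero_or_pos m with h0 | h
    · exfalso
      have h1 : A \ B = ∅ := Finset.card_eq_zero.mp h0
      have hsub : A ⊆ B := Finset.sdiff_eq_empty_iff_subset.mp h1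
      exact hAB (Finset.eq_of_subset_of_card_le hsub (hBcard.trans hAcard.symm).le)
    · exact h
  set f : Fin n → ZMod n := fun i => ((i : ℕ) : ZMod n) + 1 with hf
  have hinj : Function.Injective f := by
    intro i j hij
    simp only [hf, add_left_inj] at hij
    have h1 := congrArg ZMod.val hij
    rw [ZMod.val_cast_of_lt i.isLt, ZMod.val_cast_of_lt j.isLt] at h1
    exact Fin.ext h1
  have hAzero : ∀ d, 1 ≤ d → d ≤ k → ∑ i ∈ A, f i ^ d = 0 := by
    intro d h1 h2
    have := hAsum d h1 h2
    have hdvd : n ∣ ∑ i ∈ A, ((i : ℕ) + 1) ^ d := Nat.dvd_of_mod_eq_zero this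
    have : ((∑ i ∈ A, ((i : ℕ) + 1) ^ d : ℕ) : ZMod n) = 0 :=
      (ZMod.natCast_eq_zero_iff _ _).mpr hdvd
    push_cast at this
    simpa [hf] using this
  have hBzero : ∀ d, 1 ≤ d → d ≤ k → ∑ i ∈ B, f i ^ d = 0 := by
    intro d h1 h2
    have := hBsum d h1 h2
    have hdvd : n ∣ ∑ i ∈ B, ((i : ℕ) + 1) ^ d := Nat.dvd_of_mod_eq_zero this
    have : ((∑ i ∈ B, ((i : ℕ) + 1) ^ d : ℕ) : ZMod n) = 0 :=
      (ZMod.natCast_eq_zero_iff _ _).mpr hdvd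
    push_cast at this
    simpa [hf] using this
  have hdiffsum : ∀ d, 1 ≤ d → d ≤ k →
      ∑ i ∈ A \ B, f i ^ d = ∑ i ∈ B \ A, f i ^ d := by
    intro d h1 h2
    have hA' : ∑ i ∈ A ∩ B, f i ^ d + ∑ i ∈ A \ B, f i ^ d = 0 := by
      rw [Finset.sum_inter_add_sum_sdiff]; exact hAzero d h1 h2
    have hB' : ∑ i ∈ A ∩ B, f i ^ d + ∑ i ∈ B \ A, f i ^ d = 0 := by
      rw [Finset.inter_comm, Finset.sum_inter_add_sum_sdiff]; exact hBzero d h1 h2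
    linear_combination hA' - hB'
  set S : Finset (ZMod n) := (A \ B).image f with hS
  set T : Finset (ZMod n) := (B \ A).image f with hT
  have hScard : S.card = m := by rw [hS, Finset.card_image_of_injective _ hinj]
  have hTcard : T.card = m := by rw [hT, Finset.card_image_of_injective _ hinj, hBA]
  have hmn : m < n := by
    have : m ≤ A.card := by rw [hm]; exact Finset.card_le_card (Finset.sdiff_subset)
    have h2 : n / 2 < n := Nat.div_lt_self hn.pos one_lt_two
    omega
  have hchar : ∀ d : ℕ, 1 ≤ d → d ≤ m → (d : ZMod n) ≠ 0 := by
    intro d h1 h2 hd0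
    rw [ZMod.natCast_eq_zero_iff] at hd0
    have := Nat.le_of_dvd (by omega) hd0
    omega
  have hpow : ∀ d : ℕ, 1 ≤ d → d ≤ m → ∑ x ∈ S, x ^ d = ∑ x ∈ T, x ^ d := by
    intro d h1 h2
    rw [hS, hT, Finset.sum_image (fun a _ b _ h => hinj h),
      Finset.sum_image (fun a _ b _ h => hinj h)]
    exact hdiffsum d h1 (le_trans h2 hcon)
  have hST : S = T := aux_eq_19 S T m hScard hTcard hchar hpow
  obtain ⟨i, hi⟩ := Finset.card_pos.mp (by omega : 0 < (A \ B).card)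
  have : f i ∈ T := by rw [← hST, hS]; exact Finset.mem_image_of_mem f hi
  rw [hT] at this
  obtain ⟨j, hj, hji⟩ := Finset.mem_image.mp this
  have := hinj hji
  subst this
  simp only [Finset.mem_sdiff] at hi hj
  exact hj.2 hi.1
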